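/- arXiv:2408.16593 — 2 statements merged into one kernel-verified Lean document; each statement's English description precedes it below -/
import Mathlib

section
/- Let X be a Banach space and (x_n)_{n∈ℕ} ⊆ X, (x_n^*)_{n∈ℕ} ⊆ X^* be a Schauder frame of X, i.e., x = ∑_{n=1}^∞ ⟨x, x_n^*⟩ x_n (convergence in norm) for all x ∈ X. Suppose there is a sequence of scalars (c_n) such that ∑_{n=1}^∞ c_n x_n converges to some nonzero x_0 ∈ X. Then there exists a sequence (y_n^*) ⊆ X^* such that (1) x = ∑_{n=1}^∞ ⟨x, y_n^*⟩ x_n for all x ∈ X (i.e., (y_n^*) is an alternative dual of (x_n)), and (2) ⟨x_0, y_n^*⟩ = c_n for all n. -/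
open Filter

/-- Construction of alternative duals: if `((xv n), (xs n))` is a Schauder frame of a Banach
space `X` and `∑ c n • xv n` converges to some nonzero `x₀`, then there is an alternative dual
`(y n)` of `(xv n)` with `y n x₀ = c n` for all `n`. -/
theorem schauder_frame_alternative_dual_with_prescribed_coeffs
    {X : Type*} [NormedAddCommGroup X] [NormedSpace ℂ X] [CompleteSpace X]
    (xv : ℕ → X) (xs : ℕ → X →L[ℂ] ℂ)
    (hframe : ∀ x : X,
      Tendsto (fun N => ∑ n ∈ Finset.range N, (xs n x) • xv n) atTop (nhds x))
    (c : ℕ → ℂ) (x₀ : X) (hx₀ : x₀ ≠ 0)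
    (hconv : Tendsto (fun N => ∑ n ∈ Finset.range N, c n • xv n) atTop (nhds x₀)) :
    ∃ y : ℕ → X →L[ℂ] ℂ,
      (∀ x : X, Tendsto (fun N => ∑ n ∈ Finset.range N, (y n x) • xv n) atTop (nhds x)) ∧
      (∀ n : ℕ, y n x₀ = c n) := by
  obtain ⟨g, hg1, hgx⟩ := exists_dual_vector ℂ x₀ (norm_ne_zero_iff.mpr hx₀)
  set f : X →L[ℂ] ℂ := ((‖x₀‖ : ℂ)⁻¹) • g with hf
  have hx0norm : (‖x₀‖ : ℂ) ≠ 0 := by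
    simpa using norm_ne_zero_iff.mpr hx₀
  have hfx₀ : f x₀ = 1 := by
    simp [hf, hgx, inv_mul_cancel₀ hx0norm]
  refine ⟨fun n => xs n + (c n - xs n x₀) • f, ?_, ?_⟩
  · intro x
    have key : ∀ N, ∑ n ∈ Finset.range N, ((xs n + (c n - xs n x₀) • f) x) • xv n
        = (∑ n ∈ Finset.range N, (xs n x) • xv n)
          + f x • ((∑ n ∈ Finset.range N, c n • xv n)
            - ∑ n ∈ Finset.range N, (xs n x₀) • xv n) := by
      intro N
      rw [smul_sub, Finset.smul_sum, Finset.smul_sum, ← Finset.sum_sub_distrib,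
        ← Finset.sum_add_distrib]
      refine Finset.sum_congr rfl fun n _ => ?_
      simp only [ContinuousLinearMap.add_apply, ContinuousLinearMap.smul_apply, smul_eq_mul]
      rw [smul_smul, smul_smul, ← sub_smul, ← add_smul]
      congr 1
      ring
    simp only [key]
    have h1 := hframe x
    have h2 : Tendsto (fun N => f x • ((∑ n ∈ Finset.range N, c n • xv n)
        - ∑ n ∈ Finset.range N, (xs n x₀) • xv n)) atTop (nhds 0) := by
      have := (hconv.sub (hframe x₀)).const_smul (f x)
      simpa using this
    simpa using h1.add h2
  · intro n
    simp [hfx₀]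
end

section
/- Fix 1 < p < q ≤ 2 and let g_p(x) = ∑_{n=1}^∞ 2^{−n/p} f_n(x), where f_n = ∑_{m=2^{n−1}}^{2^n−1} ε_m e^{2πimx} with ε_m ∈ {±1} and ‖f_n‖_{L^∞([0,1])} ≤ 2^{(n+1)/2}. Then (a) the series defining g_p converges uniformly on [0,1] (so g_p is bounded), (b) ∑_{k∈ℤ} |ĝ_p(k)|^q < ∞, and (c) ∑_{k∈ℤ} |ĝ_p(k)|^p = ∞, where ĝ_p(k) = ∫_0^1 g_p(x) e^{−2πikx} dx. -/
open MeasureTheory intervalIntegral Filter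

/-- Orthogonality of characters on `[0,1]`. -/
lemma orth_aux (d : ℤ) :
    (∫ x in (0:ℝ)..1, Complex.exp (2 * (Real.pi : ℂ) * Complex.I * (d : ℂ) * (x : ℂ)))
      = if d = 0 then 1 else 0 := by
  by_cases hd : d = 0
  · simp [hd]
  · rw [if_neg hd]
    have hc : (2 * (Real.pi : ℂ) * Complex.I * (d : ℂ)) ≠ 0 := by
      simp [Real.pi_ne_zero, Complex.I_ne_zero, hd, Complex.ext_iff]
    rw [integral_exp_mul_complex hc]
    have h1 : Complex.exp (2 * (Real.pi : ℂ) * Complex.I * (d : ℂ) * (1:ℝ)) = 1 := by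
      rw [show (2 * (Real.pi : ℂ) * Complex.I * (d : ℂ) * ((1:ℝ):ℂ))
          = (d : ℂ) * (2 * (Real.pi : ℂ) * Complex.I) by push_cast; ring]
      exact Complex.exp_int_mul_two_pi_mul_I d
    rw [h1]
    norm_num

/-- For `K ≥ 1` and `n ≥ 1`, `K ∈ [2^{n-1}, 2^n)` iff `n = log₂ K + 1`. -/
lemma nlog_aux (K n : ℕ) (hn : 1 ≤ n) (hK : 1 ≤ K) :
    K ∈ Finset.Ico (2 ^ (n - 1)) (2 ^ n) ↔ n = Nat.log 2 K + 1 := by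
  constructor
  · intro hm
    rw [Finset.mem_Ico] at hm
    have h2 : K < 2 ^ (n - 1 + 1) := by rw [Nat.sub_add_cancel hn]; exact hm.2
    have := Nat.log_eq_of_pow_le_of_lt_pow hm.1 h2
    omega
  · rintro rfl
    rw [Finset.mem_Ico, Nat.add_sub_cancel]
    exact ⟨Nat.pow_log_le_self 2 (by omega), Nat.lt_pow_succ_log_self one_lt_two K⟩

/-- For `1 < p < q ≤ 2`, the function `g_p = ∑_{n≥1} 2^{−n/p} f_n` built from the
Rudin–Shapiro blocks `f_n` (±1 coefficients on `[2^{n−1}, 2^n−1]`, sup-norm `≤ 2^{(n+1)/2}`)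
exists as a uniform limit on `[0,1]`, its Fourier coefficients are `q`-summable, but they are
not `p`-summable. -/
theorem gp_in_Mq_not_in_Mp (p q : ℝ) (hp : 1 < p) (hpq : p < q) (hq : q ≤ 2)
    (ε : ℕ → ℕ → ℂ) (f : ℕ → ℝ → ℂ)
    (hε : ∀ n : ℕ, 1 ≤ n → ∀ m : ℕ, ε n m = 1 ∨ ε n m = -1)
    (hf : ∀ n : ℕ, 1 ≤ n → ∀ x : ℝ,
      f n x = ∑ m ∈ Finset.Ico (2 ^ (n - 1)) (2 ^ n),
        ε n m * Complex.exp (2 * (Real.pi : ℂ) * Complex.I * (m : ℂ) * (x : ℂ)))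
    (hbd : ∀ n : ℕ, 1 ≤ n → ∀ x ∈ Set.Icc (0 : ℝ) 1,
      ‖f n x‖ ≤ (2 : ℝ) ^ (((n : ℝ) + 1) / 2)) :
    ∃ g : ℝ → ℂ,
      TendstoUniformlyOn
        (fun N : ℕ => fun x : ℝ =>
          ∑ n ∈ Finset.Icc 1 N, (((2 : ℝ) ^ (-(n : ℝ) / p) : ℝ) : ℂ) * f n x)
        g atTop (Set.Icc (0 : ℝ) 1) ∧
      Summable (fun k : ℤ =>
        ‖∫ x in (0 : ℝ)..1,
            g x * Complex.exp (-2 * (Real.pi : ℂ) * Complex.I * (k : ℂ) * (x : ℂ))‖ ^ q) ∧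
      ¬ Summable (fun k : ℤ =>
        ‖∫ x in (0 : ℝ)..1,
            g x * Complex.exp (-2 * (Real.pi : ℂ) * Complex.I * (k : ℂ) * (x : ℂ))‖ ^ p) := by
  have hp0 : (0:ℝ) < p := zero_lt_one.trans hp
  have hp2 : p < 2 := lt_of_lt_of_le hpq hq
  have hq0 : (0:ℝ) < q := hp0.trans hpq
  -- the summands
  set F : ℕ → ℝ → ℂ :=
    fun n x => if n = 0 then 0 else (((2 : ℝ) ^ (-(n : ℝ) / p) : ℝ) : ℂ) * f n x with hFdef
  set r : ℝ := (2:ℝ) ^ ((1:ℝ)/2 - 1/p) with hrdef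
  set u : ℕ → ℝ := fun n => Real.sqrt 2 * r ^ n with hudef
  have hr0 : 0 ≤ r := (Real.rpow_pos_of_pos two_pos _).le
  have hr1 : r < 1 := by
    apply Real.rpow_lt_one_of_one_lt_of_neg one_lt_two
    have h12 : (1:ℝ)/2 < 1/p := by
      rw [div_lt_div_iff₀ (by norm_num) hp0]; linarith
    linarith
  have hu : Summable u := (summable_geometric_of_lt_one hr0 hr1).mul_left _
  have hu0 : ∀ n, 0 ≤ u n := fun n => mul_nonneg (Real.sqrt_nonneg _) (pow_nonneg hr0 _)
  have hFu : ∀ (n : ℕ) (x : ℝ), x ∈ Set.Icc (0:ℝ) 1 → ‖F n x‖ ≤ u n := by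
    intro n x hx
    rcases Nat.eq_zero_or_pos n with h0 | h1
    · simp only [hFdef, h0, if_pos]
      simpa using hu0 0
    · have hne : n ≠ 0 := by omega
      simp only [hFdef, if_neg hne]
      rw [norm_mul, Complex.norm_real, Real.norm_eq_abs,
        abs_of_pos (Real.rpow_pos_of_pos two_pos _)]
      calc (2:ℝ) ^ (-(n : ℝ) / p) * ‖f n x‖
          ≤ (2:ℝ) ^ (-(n : ℝ) / p) * (2:ℝ) ^ (((n : ℝ) + 1) / 2) :=
            mul_le_mul_of_nonneg_left (hbd n h1 x hx)
              (Real.rpow_pos_of_pos two_pos _).le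
        _ = u n := by
            have hun : u n = (2:ℝ) ^ ((1:ℝ)/2) * ((2:ℝ) ^ ((1:ℝ)/2 - 1/p)) ^ (n:ℕ) := by
              rw [show u n = Real.sqrt 2 * r ^ n from rfl, Real.sqrt_eq_rpow, hrdef]
            rw [hun, ← Real.rpow_natCast ((2:ℝ) ^ ((1:ℝ)/2 - 1/p)) n,
              ← Real.rpow_mul (by norm_num : (0:ℝ) ≤ 2),
              ← Real.rpow_add two_pos, ← Real.rpow_add two_pos]
            congr 1
            ring
  -- the limit function
  set g : ℝ → ℂ := fun x => ∑' n, F n x with hgdef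
  have hunif0 : TendstoUniformlyOn (fun N => fun x => ∑ n ∈ Finset.range N, F n x) g
      atTop (Set.Icc (0:ℝ) 1) := tendstoUniformlyOn_tsum_nat hu hFu
  have hsum_eq : ∀ (N : ℕ) (x : ℝ),
      (∑ n ∈ Finset.Icc 1 N, (((2 : ℝ) ^ (-(n : ℝ) / p) : ℝ) : ℂ) * f n x)
        = ∑ n ∈ Finset.range (N+1), F n x := by
    intro N x
    have h1 : (∑ n ∈ Finset.Icc 1 N, (((2 : ℝ) ^ (-(n : ℝ) / p) : ℝ) : ℂ) * f n x)
        = ∑ n ∈ Finset.Icc 1 N, F n x := by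
      refine Finset.sum_congr rfl fun n hn => ?_
      have : n ≠ 0 := by
        have := (Finset.mem_Icc.mp hn).1; omega
      simp [hFdef, this]
    rw [h1]
    refine Finset.sum_subset (fun n hn => ?_) (fun n hn hn' => ?_)
    · rw [Finset.mem_range]
      have := (Finset.mem_Icc.mp hn).2; omega
    · have hn0 : n = 0 := by
        rw [Finset.mem_range] at hn
        rw [Finset.mem_Icc] at hn'
        omega
      simp [hFdef, hn0]
  have hA : TendstoUniformlyOn
      (fun N : ℕ => fun x : ℝ =>
        ∑ n ∈ Finset.Icc 1 N, (((2 : ℝ) ^ (-(n : ℝ) / p) : ℝ) : ℂ) * f n x)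
      g atTop (Set.Icc (0 : ℝ) 1) := by
    have h1 : TendstoUniformlyOn (fun N => fun x => ∑ n ∈ Finset.range (N+1), F n x) g
        atTop (Set.Icc (0:ℝ) 1) :=
      fun v hv => (tendsto_add_atTop_nat 1).eventually (hunif0 v hv)
    exact h1.congr (Filter.Eventually.of_forall fun N x _ => (hsum_eq N x).symm)
  -- continuity
  have hfc : ∀ n : ℕ, 1 ≤ n → Continuous (f n) := by
    intro n hn
    have : f n = fun x : ℝ => ∑ m ∈ Finset.Ico (2 ^ (n - 1)) (2 ^ n),
        ε n m * Complex.exp (2 * (Real.pi : ℂ) * Complex.I * (m : ℂ) * (x : ℂ)) :=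
      funext (hf n hn)
    rw [this]
    exact continuous_finset_sum _ fun m _ =>
      continuous_const.mul (Complex.continuous_exp.comp
        (continuous_const.mul Complex.continuous_ofReal))
  have hScont : ∀ N : ℕ, Continuous (fun x : ℝ =>
      ∑ n ∈ Finset.Icc 1 N, (((2 : ℝ) ^ (-(n : ℝ) / p) : ℝ) : ℂ) * f n x) :=
    fun N => continuous_finset_sum _ fun n hn =>
      continuous_const.mul (hfc n (Finset.mem_Icc.mp hn).1)
  -- the modulus of the character is 1
  have hek : ∀ (k : ℤ) (x : ℝ),
      ‖Complex.exp (-2 * (Real.pi : ℂ) * Complex.I * (k : ℂ) * (x : ℂ))‖ = 1 := by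
    intro k x
    rw [show (-2 * (Real.pi : ℂ) * Complex.I * (k : ℂ) * (x : ℂ))
        = (((-2 * Real.pi * (k:ℝ) * x : ℝ)) : ℂ) * Complex.I by push_cast; ring,
      Complex.norm_exp_ofReal_mul_I]
  -- Fourier coefficients of the partial sums
  have hIntS : ∀ (N : ℕ) (k : ℤ),
      (∫ x in (0:ℝ)..1,
        (∑ n ∈ Finset.Icc 1 N, (((2 : ℝ) ^ (-(n : ℝ) / p) : ℝ) : ℂ) * f n x)
          * Complex.exp (-2 * (Real.pi : ℂ) * Complex.I * (k : ℂ) * (x : ℂ)))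
      = ∑ n ∈ Finset.Icc 1 N, ∑ m ∈ Finset.Ico (2 ^ (n - 1)) (2 ^ n),
          (((2 : ℝ) ^ (-(n : ℝ) / p) : ℝ) : ℂ) * ε n m * (if (m:ℤ) = k then 1 else 0) := by
    intro N k
    have hrw : ∀ x : ℝ,
        (∑ n ∈ Finset.Icc 1 N, (((2 : ℝ) ^ (-(n : ℝ) / p) : ℝ) : ℂ) * f n x)
          * Complex.exp (-2 * (Real.pi : ℂ) * Complex.I * (k : ℂ) * (x : ℂ))
        = ∑ n ∈ Finset.Icc 1 N, ∑ m ∈ Finset.Ico (2 ^ (n - 1)) (2 ^ n),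
            (((2 : ℝ) ^ (-(n : ℝ) / p) : ℝ) : ℂ) * ε n m
              * Complex.exp (2 * (Real.pi : ℂ) * Complex.I * ((((m:ℤ) - k) : ℤ) : ℂ) * (x : ℂ)) := by
      intro x
      rw [Finset.sum_mul]
      refine Finset.sum_congr rfl fun n hn => ?_
      rw [hf n (Finset.mem_Icc.mp hn).1 x, Finset.mul_sum, Finset.sum_mul]
      refine Finset.sum_congr rfl fun m hm => ?_
      have hexp : Complex.exp (2 * (Real.pi : ℂ) * Complex.I * (m : ℂ) * (x : ℂ))
            * Complex.exp (-2 * (Real.pi : ℂ) * Complex.I * (k : ℂ) * (x : ℂ))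
          = Complex.exp (2 * (Real.pi : ℂ) * Complex.I * ((((m:ℤ) - k) : ℤ) : ℂ) * (x : ℂ)) := by
        rw [← Complex.exp_add]
        congr 1
        push_cast
        ring
      rw [← hexp]
      ring
    simp only [hrw]
    rw [intervalIntegral.integral_finset_sum]
    · refine Finset.sum_congr rfl fun n hn => ?_
      rw [intervalIntegral.integral_finset_sum]
      · refine Finset.sum_congr rfl fun m hm => ?_
        rw [intervalIntegral.integral_const_mul, orth_aux]
        simp only [sub_eq_zero]
      · intro m hm
        exact (continuous_const.mul (Complex.continuous_exp.comp
          (continuous_const.mul Complex.continuous_ofReal))).intervalIntegrable _ _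
    · intro n hn
      exact (continuous_finset_sum _ fun m _ =>
        continuous_const.mul (Complex.continuous_exp.comp
          (continuous_const.mul Complex.continuous_ofReal))).intervalIntegrable _ _
  -- evaluating the double sum
  have hval : ∀ (k : ℤ) (N : ℕ), Nat.log 2 k.toNat + 1 ≤ N →
      (∑ n ∈ Finset.Icc 1 N, ∑ m ∈ Finset.Ico (2 ^ (n - 1)) (2 ^ n),
          (((2 : ℝ) ^ (-(n : ℝ) / p) : ℝ) : ℂ) * ε n m * (if (m:ℤ) = k then 1 else 0))
      = if 1 ≤ k then
          (((2 : ℝ) ^ (-((Nat.log 2 k.toNat + 1 : ℕ) : ℝ) / p) : ℝ) : ℂ)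
            * ε (Nat.log 2 k.toNat + 1) k.toNat
        else 0 := by
    intro k N hN
    by_cases hk : 1 ≤ k
    · rw [if_pos hk]
      have hK1 : 1 ≤ k.toNat := by omega
      have hrow : ∀ n ∈ Finset.Icc 1 N,
          (∑ m ∈ Finset.Ico (2 ^ (n - 1)) (2 ^ n),
            (((2 : ℝ) ^ (-(n : ℝ) / p) : ℝ) : ℂ) * ε n m * (if (m:ℤ) = k then 1 else 0))
          = if n = Nat.log 2 k.toNat + 1 then
              (((2 : ℝ) ^ (-(n : ℝ) / p) : ℝ) : ℂ) * ε n k.toNat else 0 := by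
        intro n hn
        have hcond : ∀ m : ℕ, ((m:ℤ) = k) ↔ (m = k.toNat) := fun m => by omega
        simp only [hcond, mul_ite, mul_one, mul_zero]
        rw [Finset.sum_ite_eq']
        by_cases hmem : k.toNat ∈ Finset.Ico (2 ^ (n - 1)) (2 ^ n)
        · rw [if_pos hmem,
            if_pos ((nlog_aux _ _ (Finset.mem_Icc.mp hn).1 hK1).mp hmem)]
        · rw [if_neg hmem,
            if_neg (fun h => hmem ((nlog_aux _ _ (Finset.mem_Icc.mp hn).1 hK1).mpr h))]
      rw [Finset.sum_congr rfl hrow, Finset.sum_ite_eq']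
      rw [if_pos]
      rw [Finset.mem_Icc]
      exact ⟨Nat.le_add_left 1 _, hN⟩
    · rw [if_neg hk]
      refine Finset.sum_eq_zero fun n hn => Finset.sum_eq_zero fun m hm => ?_
      rw [if_neg, mul_zero]
      intro h
      have h1 : 1 ≤ 2 ^ (n-1) := Nat.one_le_two_pow
      have h2 := (Finset.mem_Ico.mp hm).1
      omega
  -- uniform bound on the partial sums
  have hbound : ∀ (N : ℕ) (x : ℝ), x ∈ Set.Icc (0:ℝ) 1 →
      ‖∑ n ∈ Finset.Icc 1 N, (((2 : ℝ) ^ (-(n : ℝ) / p) : ℝ) : ℂ) * f n x‖ ≤ ∑' n, u n := by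
    intro N x hx
    rw [hsum_eq N x]
    calc ‖∑ n ∈ Finset.range (N+1), F n x‖
        ≤ ∑ n ∈ Finset.range (N+1), ‖F n x‖ := norm_sum_le _ _
      _ ≤ ∑ n ∈ Finset.range (N+1), u n :=
          Finset.sum_le_sum fun n _ => hFu n x hx
      _ ≤ ∑' n, u n := hu.sum_le_tsum _ (fun n _ => hu0 n)
  -- Fourier coefficients of g
  have hgcoef : ∀ k : ℤ,
      (∫ x in (0:ℝ)..1,
          g x * Complex.exp (-2 * (Real.pi : ℂ) * Complex.I * (k : ℂ) * (x : ℂ)))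
      = if 1 ≤ k then
          (((2 : ℝ) ^ (-((Nat.log 2 k.toNat + 1 : ℕ) : ℝ) / p) : ℝ) : ℂ)
            * ε (Nat.log 2 k.toNat + 1) k.toNat
        else 0 := by
    intro k
    have hsubset : Set.uIoc (0:ℝ) 1 ⊆ Set.Icc (0:ℝ) 1 := by
      rw [Set.uIoc_of_le (by norm_num : (0:ℝ) ≤ 1)]
      exact Set.Ioc_subset_Icc_self
    have hDCT : Tendsto (fun N : ℕ => ∫ x in (0:ℝ)..1,
        (∑ n ∈ Finset.Icc 1 N, (((2 : ℝ) ^ (-(n : ℝ) / p) : ℝ) : ℂ) * f n x)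
          * Complex.exp (-2 * (Real.pi : ℂ) * Complex.I * (k : ℂ) * (x : ℂ))) atTop
        (nhds (∫ x in (0:ℝ)..1,
          g x * Complex.exp (-2 * (Real.pi : ℂ) * Complex.I * (k : ℂ) * (x : ℂ)))) := by
      apply intervalIntegral.tendsto_integral_filter_of_dominated_convergence
        (bound := fun _ => ∑' n, u n)
      · exact Filter.Eventually.of_forall fun N =>
          ((hScont N).mul (Complex.continuous_exp.comp
            (continuous_const.mul Complex.continuous_ofReal))).aestronglyMeasurable
      · refine Filter.Eventually.of_forall fun N => ae_of_all _ fun x hx => ?_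
        rw [norm_mul, hek k x, mul_one]
        exact hbound N x (hsubset hx)
      · exact intervalIntegrable_const
      · refine ae_of_all _ fun x hx => ?_
        exact (hA.tendsto_at (hsubset hx)).mul tendsto_const_nhds
    have hEv : Tendsto (fun N : ℕ => ∫ x in (0:ℝ)..1,
        (∑ n ∈ Finset.Icc 1 N, (((2 : ℝ) ^ (-(n : ℝ) / p) : ℝ) : ℂ) * f n x)
          * Complex.exp (-2 * (Real.pi : ℂ) * Complex.I * (k : ℂ) * (x : ℂ))) atTop
        (nhds (if 1 ≤ k then
          (((2 : ℝ) ^ (-((Nat.log 2 k.toNat + 1 : ℕ) : ℝ) / p) : ℝ) : ℂ)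
            * ε (Nat.log 2 k.toNat + 1) k.toNat
        else 0)) := by
      refine Tendsto.congr' ?_ tendsto_const_nhds
      filter_upwards [eventually_ge_atTop (Nat.log 2 k.toNat + 1)] with N hN
      exact ((hIntS N k).trans (hval k N hN)).symm
    exact tendsto_nhds_unique hDCT hEv
  -- norms of the Fourier coefficients
  have hnorm : ∀ k : ℤ,
      ‖∫ x in (0:ℝ)..1,
          g x * Complex.exp (-2 * (Real.pi : ℂ) * Complex.I * (k : ℂ) * (x : ℂ))‖
      = if 1 ≤ k then (2 : ℝ) ^ (-((Nat.log 2 k.toNat + 1 : ℕ) : ℝ) / p) else 0 := by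
    intro k
    rw [hgcoef k]
    by_cases hk : 1 ≤ k
    · rw [if_pos hk, if_pos hk, norm_mul]
      have hε1 : ‖ε (Nat.log 2 k.toNat + 1) k.toNat‖ = 1 := by
        rcases hε (Nat.log 2 k.toNat + 1) (Nat.le_add_left 1 _) k.toNat with h | h <;> rw [h] <;> simp
      rw [hε1, mul_one, Complex.norm_real, Real.norm_eq_abs,
        abs_of_pos (Real.rpow_pos_of_pos two_pos _)]
    · simp [hk]
  refine ⟨g, hA, ?_, ?_⟩
  · -- q-summability
    simp only [hnorm]
    refine Summable.of_nat_of_neg_add_one ?_ ?_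
    · -- over nonnegative integers
      refine Summable.of_nonneg_of_le
        (g := fun n : ℕ => (if 1 ≤ (n:ℤ) then
          (2 : ℝ) ^ (-((Nat.log 2 ((n:ℤ)).toNat + 1 : ℕ) : ℝ) / p) else 0) ^ q)
        (f := fun n : ℕ => (n:ℝ) ^ (-(q/p)))
        (fun n => Real.rpow_nonneg (by positivity) q) (fun n => ?_) ?_
      · beta_reduce
        rcases Nat.eq_zero_or_pos n with h0 | h1
        · subst h0
          rw [if_neg (show ¬ (1:ℤ) ≤ ((0:ℕ):ℤ) by norm_num), Real.zero_rpow hq0.ne',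
            Nat.cast_zero,
            Real.zero_rpow (neg_ne_zero.mpr (div_ne_zero hq0.ne' hp0.ne'))]
        · rw [if_pos (show (1:ℤ) ≤ ((n:ℕ):ℤ) by exact_mod_cast h1), Int.toNat_natCast]
          set L : ℕ := Nat.log 2 n with hL
          have key : ((2 : ℝ) ^ (-((L + 1 : ℕ) : ℝ) / p)) ^ q
              = (((2:ℕ) ^ (L+1) : ℕ) : ℝ) ^ (-(q/p)) := by
            rw [← Real.rpow_mul (by norm_num : (0:ℝ) ≤ 2)]
            rw [show (((2:ℕ) ^ (L+1) : ℕ) : ℝ) = (2:ℝ) ^ ((L+1 : ℕ) : ℝ) by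
              rw [Real.rpow_natCast]; push_cast; ring]
            rw [← Real.rpow_mul (by norm_num : (0:ℝ) ≤ 2)]
            congr 1
            ring
          rw [key]
          apply Real.rpow_le_rpow_of_nonpos
          · exact_mod_cast h1
          · exact_mod_cast (Nat.lt_pow_succ_log_self one_lt_two n).le
          · rw [neg_nonpos]
            positivity
      · refine Real.summable_nat_rpow.mpr ?_
        have h1 : 1 < q / p := (one_lt_div hp0).mpr hpq
        linarith
    · -- over negative integers: all terms vanish
      refine summable_zero.congr fun n => ?_
      rw [if_neg (show ¬ (1:ℤ) ≤ -((n:ℤ)+1) by omega), Real.zero_rpow hq0.ne']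
  · -- not p-summable
    intro hS
    have hS' : Summable (fun k : ℤ =>
        (if 1 ≤ k then (2 : ℝ) ^ (-((Nat.log 2 k.toNat + 1 : ℕ) : ℝ) / p) else 0) ^ p) := by
      refine hS.congr fun k => ?_
      rw [hnorm]
    have hS2 : Summable (fun n : ℕ =>
        (if 1 ≤ (n:ℤ) then (2 : ℝ) ^ (-((Nat.log 2 ((n:ℤ)).toNat + 1 : ℕ) : ℝ) / p) else 0) ^ p) :=
      hS'.comp_injective (i := fun n : ℕ => (n:ℤ)) (fun a b h => by simpa using h)
    have hS3 : Summable (fun n : ℕ =>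
        (if 1 ≤ ((n+1:ℕ):ℤ) then
          (2 : ℝ) ^ (-((Nat.log 2 (((n+1:ℕ):ℤ)).toNat + 1 : ℕ) : ℝ) / p) else 0) ^ p) :=
      (summable_nat_add_iff 1).mpr hS2
    have hS4 : Summable (fun n : ℕ => ((2:ℝ) * ((n:ℝ) + 1))⁻¹) := by
      refine Summable.of_nonneg_of_le (fun n => by positivity) (fun n => ?_) hS3
      have h1 : (1:ℤ) ≤ ((n+1:ℕ):ℤ) := by omega
      rw [if_pos h1, Int.toNat_natCast]
      set L : ℕ := Nat.log 2 (n+1) with hL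
      have key : ((2 : ℝ) ^ (-((L + 1 : ℕ) : ℝ) / p)) ^ p
          = (((2:ℕ) ^ (L+1) : ℕ) : ℝ)⁻¹ := by
        rw [← Real.rpow_mul (by norm_num : (0:ℝ) ≤ 2),
          div_mul_cancel₀ _ hp0.ne']
        rw [show (((2:ℕ) ^ (L+1) : ℕ) : ℝ) = (2:ℝ) ^ ((L+1 : ℕ) : ℝ) by
          rw [Real.rpow_natCast]; push_cast; ring]
        rw [← Real.rpow_neg (by norm_num : (0:ℝ) ≤ 2)]
      rw [key]
      apply inv_anti₀ (by positivity)
      have h2 : (2:ℕ) ^ (L+1) ≤ 2 * (n+1) := by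
        rw [pow_succ, mul_comm]
        exact Nat.mul_le_mul_left 2 (Nat.pow_log_le_self 2 (by omega))
      calc (((2:ℕ) ^ (L+1) : ℕ) : ℝ) ≤ ((2 * (n+1) : ℕ) : ℝ) := by exact_mod_cast h2
        _ = 2 * ((n:ℝ) + 1) := by push_cast; ring
    have hS5 : Summable (fun n : ℕ => ((n:ℝ) + 1)⁻¹) := by
      have := hS4.mul_left 2
      refine this.congr fun n => ?_
      rw [mul_inv, ← mul_assoc, mul_inv_cancel₀ (two_ne_zero), one_mul]
    have hS6 : Summable (fun n : ℕ => ((n:ℕ):ℝ)⁻¹) := by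
      refine (summable_nat_add_iff 1).mp ?_
      refine hS5.congr fun n => ?_
      push_cast
      ring
    exact Real.not_summable_natCast_inv hS6
end
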